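/- Borel–Bernstein Theorem (convergence direction): if (b_n) is a sequence of positive reals with Σ_n 1/b_n < ∞, then for Lebesgue-almost every x in [0,1), the inequality a_n(x) ≥ b_n holds for only finitely many n. -/

import Mathlib

open MeasureTheory Filter Set Topology

/-- The Gauss map `τ(x) = 1/x - ⌊1/x⌋`, with `τ(0) = 0`. -/
noncomputable def gaussMap (x : ℝ) : ℝ := if x = 0 then 0 else 1 / x - ⌊1 / x⌋

/-- The `n`-th continued fraction digit `a_n(x) = ⌊1/τ^{n-1}(x)⌋`. -/
noncomputable def cfDigit (n : ℕ) (x : ℝ) : ℕ := ⌊1 / (gaussMap^[n - 1] x)⌋₊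

/-- The Gauss measure on `[0,1)` with density `1/((x+1) log 2)`. -/
noncomputable def gaussMeasure : Measure ℝ :=
  (volume.restrict (Set.Ico (0 : ℝ) 1)).withDensity
    (fun x => ENNReal.ofReal (1 / ((x + 1) * Real.log 2)))

noncomputable def gaussDens (x : ℝ) : ENNReal := ENNReal.ofReal (1 / ((x + 1) * Real.log 2))

lemma gaussMeasure_def :
    gaussMeasure = (volume.restrict (Set.Ico (0 : ℝ) 1)).withDensity gaussDens := rfl

lemma log2_pos : 0 < Real.log 2 := Real.log_pos one_lt_two

lemma measurable_gaussDens : Measurable gaussDens := by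
  apply Measurable.ennreal_ofReal
  exact measurable_const.div ((measurable_id.add_const 1).mul measurable_const)

lemma measurable_gaussMap : Measurable gaussMap := by
  unfold gaussMap
  apply Measurable.ite (MeasurableSet.singleton (0:ℝ)) measurable_const
  exact (measurable_const.div measurable_id).sub
    (measurable_from_top.comp ((measurable_const.div measurable_id).floor))

lemma gaussMap_mem_Ico {x : ℝ} (hx : x ∈ Set.Ico (0:ℝ) 1) : gaussMap x ∈ Set.Ico (0:ℝ) 1 := by
  rcases eq_or_ne x 0 with h | h
  · simp [gaussMap, h]
  · rw [gaussMap, if_neg h]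
    constructor
    · linarith [Int.floor_le (1 / x)]
    · linarith [Int.lt_floor_add_one (1 / x)]

lemma gm_apply {S : Set ℝ} (hS : MeasurableSet S) :
    gaussMeasure S = ∫⁻ x in S ∩ Set.Ico (0:ℝ) 1, gaussDens x ∂volume := by
  rw [gaussMeasure_def, withDensity_apply _ hS, Measure.restrict_restrict hS]

lemma gm_ac : gaussMeasure ≪ (volume : Measure ℝ) :=
  (withDensity_absolutelyContinuous _ _).trans
    (Measure.absolutelyContinuous_of_le Measure.restrict_le_self)

lemma gm_compl_Ioo : gaussMeasure ((Set.Ioo (0:ℝ) 1)ᶜ) = 0 := by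
  rw [gm_apply measurableSet_Ioo.compl]
  have hsub : (Set.Ioo (0:ℝ) 1)ᶜ ∩ Set.Ico (0:ℝ) 1 ⊆ {(0:ℝ)} := by
    rintro x ⟨h1, h2, h3⟩
    simp only [mem_compl_iff, mem_Ioo, not_and, not_lt] at h1
    simp only [mem_singleton_iff]
    by_contra hne
    exact absurd (h1 (lt_of_le_of_ne h2 (Ne.symm hne))) (not_le.2 h3)
  have : volume ((Set.Ioo (0:ℝ) 1)ᶜ ∩ Set.Ico (0:ℝ) 1) = 0 :=
    measure_mono_null hsub (measure_singleton 0)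
  rw [setLIntegral_measure_zero _ _ this]

lemma gm_inter_Ioo (A : Set ℝ) : gaussMeasure A = gaussMeasure (A ∩ Set.Ioo 0 1) := by
  apply le_antisymm
  · calc gaussMeasure A ≤ gaussMeasure ((A ∩ Set.Ioo 0 1) ∪ (Set.Ioo (0:ℝ) 1)ᶜ) := by
          apply measure_mono
          intro x hx
          by_cases h : x ∈ Set.Ioo (0:ℝ) 1
          · exact Or.inl ⟨hx, h⟩
          · exact Or.inr h
      _ ≤ gaussMeasure (A ∩ Set.Ioo 0 1) + gaussMeasure ((Set.Ioo (0:ℝ) 1)ᶜ) :=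
          measure_union_le _ _
      _ = gaussMeasure (A ∩ Set.Ioo 0 1) := by rw [gm_compl_Ioo, add_zero]
  · exact measure_mono inter_subset_left

lemma gm_Ioc {a b : ℝ} (h0 : 0 ≤ a) (hab : a ≤ b) (hb1 : b ≤ 1) :
    gaussMeasure (Set.Ioc a b) =
      ENNReal.ofReal ((Real.log (b + 1) - Real.log (a + 1)) / Real.log 2) := by
  rw [gm_apply measurableSet_Ioc]
  have hset : (Set.Ioc a b ∩ Set.Ico (0:ℝ) 1 : Set ℝ) =ᵐ[volume] Set.Ioc a b := by
    rw [Filter.eventuallyEq_set]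
    have : ∀ᵐ x : ℝ ∂volume, x ≠ 1 := by
      have h1 : volume ({(1:ℝ)}) = 0 := measure_singleton 1
      simpa [ae_iff] using h1
    filter_upwards [this] with x hx
    simp only [mem_inter_iff, mem_Ioc, mem_Ico, and_iff_left_iff_imp]
    rintro ⟨hxa, hxb⟩
    refine ⟨le_trans h0 hxa.le, ?_⟩
    rcases lt_or_eq_of_le (le_trans hxb hb1) with h | h
    · exact h
    · exact absurd h hx
  rw [setLIntegral_congr hset]
  have hL : (0:ℝ) < Real.log 2 := log2_pos
  have hcont : ContinuousOn (fun x : ℝ => 1 / ((x + 1) * Real.log 2)) (Set.Icc a b) := by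
    apply ContinuousOn.div continuousOn_const
    · exact (continuousOn_id.add continuousOn_const).mul continuousOn_const
    · intro x hx
      have : 0 < x + 1 := by linarith [hx.1]
      positivity
  have hint : IntegrableOn (fun x : ℝ => 1 / ((x + 1) * Real.log 2)) (Set.Ioc a b) volume :=
    (hcont.integrableOn_Icc).mono_set Set.Ioc_subset_Icc_self
  have hnn : 0 ≤ᵐ[volume.restrict (Set.Ioc a b)]
      (fun x : ℝ => 1 / ((x + 1) * Real.log 2)) := by
    apply ae_restrict_of_forall_mem measurableSet_Ioc
    intro x hx
    have : 0 < x + 1 := by linarith [hx.1, h0]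
    positivity
  have key := MeasureTheory.ofReal_integral_eq_lintegral_ofReal hint hnn
  simp only [gaussDens]
  rw [← key]
  congr 1
  have h1 : ∫ x in Set.Ioc a b, 1 / ((x + 1) * Real.log 2) =
      ∫ x in a..b, 1 / ((x + 1) * Real.log 2) := (intervalIntegral.integral_of_le hab).symm
  rw [h1]
  have h2 : ∀ x : ℝ, 1 / ((x + 1) * Real.log 2) = 1 / (x + 1) * (1 / Real.log 2) := by
    intro x; rw [one_div_mul_one_div]
  simp only [h2]
  rw [intervalIntegral.integral_mul_const]
  have h3 : (∫ x in a..b, 1 / (x + 1)) = Real.log (b + 1) - Real.log (a + 1) := by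
    have hc := intervalIntegral.integral_comp_add_right (a := a) (b := b)
      (fun x : ℝ => 1 / x) 1
    rw [hc, integral_one_div, Real.log_div (by linarith) (by linarith)]
    exact Set.notMem_uIcc_of_lt (by linarith) (by linarith)
  rw [h3]; ring

lemma gm_Icc {a b : ℝ} (h0 : 0 ≤ a) (hab : a ≤ b) (hb1 : b ≤ 1) :
    gaussMeasure (Set.Icc a b) =
      ENNReal.ofReal ((Real.log (b + 1) - Real.log (a + 1)) / Real.log 2) := by
  rw [← gm_Ioc h0 hab hb1]
  apply le_antisymm
  · calc gaussMeasure (Set.Icc a b) ≤ gaussMeasure (Set.Ioc a b ∪ {a}) := by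
          apply measure_mono; intro x hx
          rcases eq_or_lt_of_le hx.1 with h | h
          · exact Or.inr (by simp [h.symm])
          · exact Or.inl ⟨h, hx.2⟩
      _ ≤ gaussMeasure (Set.Ioc a b) + gaussMeasure {a} := measure_union_le _ _
      _ = gaussMeasure (Set.Ioc a b) := by rw [gm_ac (measure_singleton a), add_zero]
  · exact measure_mono Set.Ioc_subset_Icc_self

lemma gm_le {S : Set ℝ} (hS : MeasurableSet S) :
    gaussMeasure S ≤ ENNReal.ofReal (1 / Real.log 2) * volume (S ∩ Set.Ico (0:ℝ) 1) := by
  rw [gm_apply hS]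
  calc ∫⁻ x in S ∩ Set.Ico (0:ℝ) 1, gaussDens x ∂volume
      ≤ ∫⁻ _x in S ∩ Set.Ico (0:ℝ) 1, ENNReal.ofReal (1 / Real.log 2) ∂volume := by
        apply setLIntegral_mono measurable_const
        intro x hx
        apply ENNReal.ofReal_le_ofReal
        have hx0 : (0:ℝ) ≤ x := hx.2.1
        rw [div_le_div_iff₀ (by positivity) log2_pos]
        nlinarith [log2_pos]
    _ = ENNReal.ofReal (1 / Real.log 2) * volume (S ∩ Set.Ico (0:ℝ) 1) := by
        rw [setLIntegral_const]

instance : IsFiniteMeasure gaussMeasure := by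
  constructor
  apply lt_of_le_of_lt (gm_le MeasurableSet.univ)
  rw [Set.univ_inter]
  apply ENNReal.mul_lt_top ENNReal.ofReal_lt_top
  rw [Real.volume_Ico]
  exact ENNReal.ofReal_lt_top

lemma restrict_ac : volume.restrict (Set.Ico (0:ℝ) 1) ≪ gaussMeasure := by
  apply Measure.AbsolutelyContinuous.mk
  intro S hS h0
  rw [gaussMeasure_def, withDensity_apply_eq_zero measurable_gaussDens] at h0
  rw [Measure.restrict_apply hS]
  rw [Measure.restrict_apply' measurableSet_Ico] at h0
  apply measure_mono_null ?_ h0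
  intro x hx
  refine ⟨⟨?_, hx.1⟩, hx.2⟩
  simp only [gaussDens, ne_eq, ENNReal.ofReal_eq_zero, not_le]
  have hx0 : (0:ℝ) ≤ x := hx.2.1
  have : 0 < x + 1 := by linarith
  exact div_pos one_pos (mul_pos this log2_pos)

lemma gaussMap_map_eq : gaussMeasure.map gaussMap = gaussMeasure := by
  haveI : IsFiniteMeasure (gaussMeasure.map gaussMap) := by
    constructor
    rw [Measure.map_apply measurable_gaussMap MeasurableSet.univ]
    exact measure_lt_top _ _
  refine Measure.ext_of_Iic _ _ (fun t => ?_)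
  rw [Measure.map_apply measurable_gaussMap measurableSet_Iic]
  rcases lt_or_ge t 0 with ht | ht
  · rw [gm_inter_Ioo (gaussMap ⁻¹' Set.Iic t), gm_inter_Ioo (Set.Iic t)]
    have e1 : gaussMap ⁻¹' Set.Iic t ∩ Set.Ioo 0 1 = (∅ : Set ℝ) := by
      ext x
      simp only [mem_inter_iff, mem_preimage, mem_Iic, mem_Ioo, mem_empty_iff_false, iff_false]
      rintro ⟨h1, h2, h3⟩
      have := (gaussMap_mem_Ico ⟨h2.le, h3⟩).1
      linarith
    have e2 : Set.Iic t ∩ Set.Ioo 0 1 = (∅ : Set ℝ) := by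
      ext x
      simp only [mem_inter_iff, mem_Iic, mem_Ioo, mem_empty_iff_false, iff_false]
      rintro ⟨h1, h2, h3⟩; linarith
    rw [e1, e2]
  rcases lt_or_ge t 1 with ht1 | ht1
  swap
  · rw [gm_inter_Ioo (gaussMap ⁻¹' Set.Iic t), gm_inter_Ioo (Set.Iic t)]
    have e1 : gaussMap ⁻¹' Set.Iic t ∩ Set.Ioo 0 1 = Set.Ioo (0:ℝ) 1 := by
      apply Set.inter_eq_right.2
      intro x hx
      have := (gaussMap_mem_Ico ⟨hx.1.le, hx.2⟩).2
      simp only [mem_preimage, mem_Iic]; linarith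
    have e2 : Set.Iic t ∩ Set.Ioo 0 1 = Set.Ioo (0:ℝ) 1 := by
      apply Set.inter_eq_right.2
      intro x hx
      simp only [mem_Iic]; linarith [hx.2]
    rw [e1, e2]
  -- main case : 0 ≤ t < 1
  · have hL := log2_pos
    set B : ℕ → Set ℝ := fun k => Set.Icc (1 / ((k:ℝ) + 1 + t)) (1 / ((k:ℝ) + 1)) with hB
    -- the set identity
    have hident : gaussMap ⁻¹' Set.Iic t ∩ Set.Ioo 0 1 = (⋃ k, B k) ∩ Set.Ioo 0 1 := by
      ext x
      simp only [mem_inter_iff, mem_preimage, mem_Iic, mem_Ioo, mem_iUnion, hB, mem_Icc]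
      constructor
      · rintro ⟨hτ, hx0, hx1⟩
        refine ⟨?_, hx0, hx1⟩
        have hxne : x ≠ 0 := hx0.ne'
        rw [gaussMap, if_neg hxne] at hτ
        have hx1' : (1:ℝ) ≤ 1 / x := by rw [le_div_iff₀ hx0]; linarith
        have hm : 1 ≤ ⌊1 / x⌋ := Int.le_floor.2 (by exact_mod_cast hx1')
        have hmR : (1:ℝ) ≤ (⌊1 / x⌋ : ℝ) := by exact_mod_cast hm
        refine ⟨(⌊1 / x⌋ - 1).toNat, ?_, ?_⟩
        · have hcast : (((⌊1 / x⌋ - 1).toNat : ℕ) : ℝ) = (⌊1 / x⌋ : ℝ) - 1 := by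
            have h' : (0:ℤ) ≤ ⌊1 / x⌋ - 1 := by omega
            have h'' : ((⌊1 / x⌋ - 1).toNat : ℤ) = ⌊1 / x⌋ - 1 := Int.toNat_of_nonneg h'
            exact_mod_cast congrArg (fun z : ℤ => (z : ℝ)) h''
          rw [hcast]
          have h2 : 1 / x ≤ (⌊1 / x⌋ : ℝ) + t := by linarith
          have hstep := one_div_le_one_div_of_le (by positivity : (0:ℝ) < 1 / x) h2
          rw [one_div_one_div] at hstep
          calc 1 / ((⌊1 / x⌋:ℝ) - 1 + 1 + t) = 1 / ((⌊1 / x⌋:ℝ) + t) := by ring_nf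
            _ ≤ x := hstep
        · have hcast : (((⌊1 / x⌋ - 1).toNat : ℕ) : ℝ) = (⌊1 / x⌋ : ℝ) - 1 := by
            have h' : (0:ℤ) ≤ ⌊1 / x⌋ - 1 := by omega
            have h'' : ((⌊1 / x⌋ - 1).toNat : ℤ) = ⌊1 / x⌋ - 1 := Int.toNat_of_nonneg h'
            exact_mod_cast congrArg (fun z : ℤ => (z : ℝ)) h''
          rw [hcast]
          have hfl : (⌊1 / x⌋ : ℝ) ≤ 1 / x := Int.floor_le _
          have hstep := one_div_le_one_div_of_le (by linarith : (0:ℝ) < (⌊1 / x⌋ : ℝ)) hfl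
          rw [one_div_one_div] at hstep
          calc x ≤ 1 / (⌊1 / x⌋:ℝ) := hstep
            _ = 1 / ((⌊1 / x⌋:ℝ) - 1 + 1) := by ring_nf
      · rintro ⟨⟨k, hk1, hk2⟩, hx0, hx1⟩
        refine ⟨?_, hx0, hx1⟩
        have hxne : x ≠ 0 := hx0.ne'
        have hkp : (0:ℝ) < (k:ℝ) + 1 := by positivity
        have hktp : (0:ℝ) < (k:ℝ) + 1 + t := by linarith
        have hlb : (k:ℝ) + 1 ≤ 1 / x := by
          have := one_div_le_one_div_of_le hx0 hk2
          rwa [one_div_one_div] at this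
        have hub : 1 / x ≤ (k:ℝ) + 1 + t := by
          have := one_div_le_one_div_of_le (by positivity : (0:ℝ) < 1 / ((k:ℝ) + 1 + t)) hk1
          rwa [one_div_one_div] at this
        have hfloor : ⌊1 / x⌋ = (k:ℤ) + 1 := by
          rw [Int.floor_eq_iff]
          constructor
          · push_cast; exact hlb
          · push_cast; linarith
        rw [gaussMap, if_neg hxne, hfloor]
        push_cast
        linarith
    rw [gm_inter_Ioo (gaussMap ⁻¹' Set.Iic t), hident, ← gm_inter_Ioo (⋃ k, B k)]
    -- disjointness
    have hdisj : Pairwise (Function.onFun Disjoint B) := by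
      have key : ∀ i j : ℕ, i < j → Disjoint (B i) (B j) := by
        intro i j hij
        rw [Set.disjoint_left]
        intro x hxi hxj
        have h1 : 1 / ((j:ℝ) + 1) < 1 / ((i:ℝ) + 1 + t) := by
          apply one_div_lt_one_div_of_lt (by positivity)
          have : (i:ℝ) + 1 ≤ (j:ℝ) := by exact_mod_cast Nat.succ_le_of_lt hij
          linarith
        have := hxi.1
        have := hxj.2
        linarith
      intro i j hij
      rcases lt_or_gt_of_ne hij with h | h
      · exact key i j h
      · exact (key j i h).symm
    have hmeasB : ∀ k, MeasurableSet (B k) := fun k => measurableSet_Icc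
    rw [measure_iUnion hdisj hmeasB]
    -- values of the pieces
    set G : ℕ → ℝ := fun k =>
      (Real.log ((k:ℝ) + 1 + t) - Real.log ((k:ℝ) + 1)) / Real.log 2 with hG
    have hval : ∀ k, gaussMeasure (B k) = ENNReal.ofReal (G k - G (k + 1)) := by
      intro k
      have hkp : (0:ℝ) < (k:ℝ) + 1 := by positivity
      have hktp : (0:ℝ) < (k:ℝ) + 1 + t := by linarith
      have h0 : (0:ℝ) ≤ 1 / ((k:ℝ) + 1 + t) := by positivity
      have hab : 1 / ((k:ℝ) + 1 + t) ≤ 1 / ((k:ℝ) + 1) :=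
        one_div_le_one_div_of_le hkp (by linarith)
      have hb1 : 1 / ((k:ℝ) + 1) ≤ 1 := by
        rw [div_le_one hkp]; linarith
      rw [hB]
      rw [gm_Icc h0 hab hb1]
      congr 1
      have e1 : 1 / ((k:ℝ) + 1) + 1 = ((k:ℝ) + 2) / ((k:ℝ) + 1) := by field_simp; ring
      have e2 : 1 / ((k:ℝ) + 1 + t) + 1 = ((k:ℝ) + 2 + t) / ((k:ℝ) + 1 + t) := by
        field_simp; ring
      rw [e1, e2, Real.log_div (by linarith) hkp.ne', Real.log_div (by linarith) hktp.ne']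
      simp only [hG]
      push_cast
      have e3 : (k:ℝ) + 1 + 1 + t = (k:ℝ) + 2 + t := by ring
      have e4 : (k:ℝ) + 1 + 1 = (k:ℝ) + 2 := by ring
      rw [e3, e4]
      ring
    simp only [hval]
    -- telescoping sum
    have hGnonneg : ∀ k, 0 ≤ G k - G (k + 1) := by
      intro k
      have hkp : (0:ℝ) < (k:ℝ) + 1 := by positivity
      have hktp : (0:ℝ) < (k:ℝ) + 1 + t := by linarith
      have hkp' : (0:ℝ) < (k:ℝ) + 2 := by positivity
      have hktp' : (0:ℝ) < (k:ℝ) + 2 + t := by linarith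
      have hG1 : G k = Real.log (((k:ℝ) + 1 + t) / ((k:ℝ) + 1)) / Real.log 2 := by
        simp only [hG]; rw [Real.log_div hktp.ne' hkp.ne']
      have hG2 : G (k+1) = Real.log (((k:ℝ) + 2 + t) / ((k:ℝ) + 2)) / Real.log 2 := by
        simp only [hG]; push_cast
        rw [show (k:ℝ) + 1 + 1 + t = (k:ℝ) + 2 + t by ring,
          show (k:ℝ) + 1 + 1 = (k:ℝ) + 2 by ring,
          Real.log_div hktp'.ne' hkp'.ne']
      have hle : ((k:ℝ) + 2 + t) / ((k:ℝ) + 2) ≤ ((k:ℝ) + 1 + t) / ((k:ℝ) + 1) := by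
        rw [div_le_div_iff₀ hkp' hkp]
        nlinarith
      have hlog := Real.log_le_log (by positivity) hle
      rw [sub_nonneg, hG1, hG2]
      exact div_le_div_of_nonneg_right hlog hL.le |>.trans_eq rfl
    have hGtend : Tendsto G atTop (𝓝 0) := by
      have hform : ∀ n : ℕ, G n = Real.log (1 + t / ((n:ℝ) + 1)) / Real.log 2 := by
        intro n
        have hnp : (0:ℝ) < (n:ℝ) + 1 := by positivity
        have hntp : (0:ℝ) < (n:ℝ) + 1 + t := by linarith
        simp only [hG]
        rw [← Real.log_div hntp.ne' hnp.ne']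
        congr 2
        field_simp
      rw [funext hform]
      have h1 : Tendsto (fun n : ℕ => t / ((n:ℝ) + 1)) atTop (𝓝 0) := by
        apply Tendsto.div_atTop tendsto_const_nhds
        exact tendsto_atTop_add_const_right atTop 1 tendsto_natCast_atTop_atTop
      have h2 : Tendsto (fun n : ℕ => 1 + t / ((n:ℝ) + 1)) atTop (𝓝 1) := by
        have := h1.const_add 1
        simpa using this
      have h3 : Tendsto (fun n : ℕ => Real.log (1 + t / ((n:ℝ) + 1))) atTop (𝓝 0) := by
        have := (Real.continuousAt_log one_ne_zero).tendsto.comp h2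
        simpa [Real.log_one, Function.comp_def] using this
      simpa using h3.div_const (Real.log 2)
    have hHasSum : HasSum (fun k => G k - G (k + 1)) (G 0) := by
      rw [hasSum_iff_tendsto_nat_of_nonneg hGnonneg]
      have hps : ∀ n : ℕ, ∑ i ∈ Finset.range n, (G i - G (i + 1)) = G 0 - G n := fun n =>
        Finset.sum_range_sub' G n
      simp only [hps]
      have := hGtend.const_sub (G 0)
      simpa using this
    have htsum : (∑' k, ENNReal.ofReal (G k - G (k + 1))) = ENNReal.ofReal (G 0) := by
      rw [← ENNReal.ofReal_tsum_of_nonneg hGnonneg hHasSum.summable, hHasSum.tsum_eq]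
    rw [htsum]
    -- right hand side
    rw [gm_inter_Ioo (Set.Iic t)]
    have e2 : Set.Iic t ∩ Set.Ioo 0 1 = Set.Ioc (0:ℝ) t := by
      ext x
      simp only [mem_inter_iff, mem_Iic, mem_Ioo, mem_Ioc]
      constructor
      · rintro ⟨h1, h2, h3⟩; exact ⟨h2, h1⟩
      · rintro ⟨h1, h2⟩; exact ⟨h2, h1, by linarith⟩
    rw [e2, gm_Ioc le_rfl ht (by linarith)]
    congr 1
    simp only [hG]
    norm_num
    ring_nf

theorem borel_bernstein_convergence (b : ℕ → ℝ) (hb : ∀ n, 0 < b n)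
    (hsum : Summable (fun n => 1 / b n)) :
    ∀ᵐ x ∂(volume.restrict (Set.Ico (0 : ℝ) 1)), Irrational x →
      {n : ℕ | b n ≤ (cfDigit n x : ℝ)}.Finite := by
  have hmp : MeasurePreserving gaussMap gaussMeasure gaussMeasure :=
    ⟨measurable_gaussMap, gaussMap_map_eq⟩
  set s : ℕ → Set ℝ := fun n => (gaussMap^[n - 1]) ⁻¹' (Set.Ioc 0 (1 / b n)) with hs
  have hμs : ∀ n, gaussMeasure (s n) = gaussMeasure (Set.Ioc 0 (1 / b n)) := by
    intro n
    have hit := hmp.iterate (n - 1)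
    rw [hs]
    rw [← Measure.map_apply hit.measurable measurableSet_Ioc, hit.map_eq]
  have hbound : ∀ n, gaussMeasure (s n) ≤
      ENNReal.ofReal (1 / Real.log 2) * ENNReal.ofReal (1 / b n) := by
    intro n
    rw [hμs n]
    calc gaussMeasure (Set.Ioc 0 (1 / b n))
        ≤ ENNReal.ofReal (1 / Real.log 2) * volume (Set.Ioc 0 (1 / b n) ∩ Set.Ico (0:ℝ) 1) :=
          gm_le measurableSet_Ioc
      _ ≤ ENNReal.ofReal (1 / Real.log 2) * ENNReal.ofReal (1 / b n) := by
          apply mul_le_mul_right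
          calc volume (Set.Ioc 0 (1 / b n) ∩ Set.Ico (0:ℝ) 1)
              ≤ volume (Set.Ioc 0 (1 / b n)) := measure_mono inter_subset_left
            _ = ENNReal.ofReal (1 / b n) := by rw [Real.volume_Ioc, sub_zero]
  have htsum : (∑' n, gaussMeasure (s n)) ≠ ⊤ := by
    apply ne_top_of_le_ne_top ?_ (ENNReal.tsum_le_tsum hbound)
    rw [ENNReal.tsum_mul_left]
    apply ENNReal.mul_ne_top ENNReal.ofReal_ne_top
    rw [← ENNReal.ofReal_tsum_of_nonneg (fun n => le_of_lt (one_div_pos.mpr (hb n))) hsum]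
    exact ENNReal.ofReal_ne_top
  have hae := MeasureTheory.ae_eventually_notMem htsum
  have hac : volume.restrict (Set.Ico (0:ℝ) 1) ≪ gaussMeasure := restrict_ac
  filter_upwards [hac.ae_le hae] with x hx _
  obtain ⟨N, hN⟩ := eventually_atTop.1 hx
  apply Set.Finite.subset (Set.finite_Iio N)
  intro n hn
  simp only [mem_setOf_eq] at hn
  by_contra hcon
  simp only [mem_Iio, not_lt] at hcon
  apply hN n hcon
  -- show x ∈ s n
  rw [hs]
  simp only [mem_preimage, mem_Ioc]
  set y := gaussMap^[n - 1] x with hy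
  have hfl : b n ≤ (⌊1 / y⌋₊ : ℝ) := hn
  have hflpos : 0 < ⌊1 / y⌋₊ := by
    rcases Nat.eq_zero_or_pos ⌊1 / y⌋₊ with h | h
    · rw [h] at hfl
      norm_num at hfl
      linarith [hb n]
    · exact h
  have h1y : (1:ℝ) ≤ 1 / y := Nat.floor_pos.1 hflpos
  have hy0 : 0 < y := by
    by_contra h
    push_neg at h
    have : 1 / y ≤ 0 := div_nonpos_of_nonneg_of_nonpos zero_le_one h
    linarith
  refine ⟨hy0, ?_⟩
  have hle : b n ≤ 1 / y := le_trans hfl (Nat.floor_le (by positivity))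
  rw [le_div_iff₀ hy0] at hle
  rw [le_div_iff₀ (hb n)]
  nlinarith [hb n]
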